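/- The minimum over γ1 ∈ [π/4, π/2] and x3 ∈ [-1,1] of the piecewise function g(x3, γ1, π/2 − γ1) (given by 1/2 − (1+x3)x3 cos²γ1/(−1 + 3x3 + (1+x3)cos(2γ1)) for −1 ≤ x3 < x3^(4) and (1+x3)(1 + sin 2γ1)/4 for x3^(4) ≤ x3 ≤ 1, with x3^(4) = (1 − √2 sin(2γ1 + π/4))/(3 + √2 sin(2γ1 + π/4))) equals 4/9, and it is attained uniquely at γ1 = π/4, x3 = −1/3. -/
import Mathlib

open Real

lemma key_ineq (s c : ℝ) (hs : 0 ≤ s) (hsc : s^2 + c^2 = 1) (hc0 : c ≤ 0)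
    (hc1 : -1 ≤ c) : 3 + 4*c < 5*s := by
  rcases lt_or_ge c (-(3/4)) with h | h
  · linarith
  · nlinarith [mul_nonneg (neg_nonneg.2 hc0) (by linarith : (0:ℝ) ≤ c + 3/4)]

set_option maxHeartbeats 1000000 in
lemma aux_main (γ1 x : ℝ) (hγ : γ1 ∈ Set.Icc (π/4) (π/2)) (hx : x ∈ Set.Icc (-1:ℝ) 1) :
    4/9 ≤ (if x < (1 - Real.sqrt 2 * Real.sin (2*γ1 + π/4)) / (3 + Real.sqrt 2 * Real.sin (2*γ1 + π/4))
      then 1/2 - (1 + x) * x * (Real.cos γ1)^2 / (-1 + 3*x + (1 + x) * Real.cos (2*γ1))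
      else (1 + x) * (1 + Real.sin (2*γ1)) / 4) ∧
    ((if x < (1 - Real.sqrt 2 * Real.sin (2*γ1 + π/4)) / (3 + Real.sqrt 2 * Real.sin (2*γ1 + π/4))
      then 1/2 - (1 + x) * x * (Real.cos γ1)^2 / (-1 + 3*x + (1 + x) * Real.cos (2*γ1))
      else (1 + x) * (1 + Real.sin (2*γ1)) / 4) = 4/9 → γ1 = π/4 ∧ x = -1/3) := by
  obtain ⟨hγl, hγr⟩ := hγ
  obtain ⟨hxl, hxr⟩ := hx
  have hπ : (0:ℝ) < π := Real.pi_pos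
  set s := Real.sin (2*γ1) with hs_def
  set c := Real.cos (2*γ1) with hc_def
  have hs : 0 ≤ s := Real.sin_nonneg_of_nonneg_of_le_pi (by linarith) (by linarith)
  have hc0 : c ≤ 0 := Real.cos_nonpos_of_pi_div_two_le_of_le (by linarith) (by linarith)
  have hc1 : -1 ≤ c := Real.neg_one_le_cos _
  have hsc : s^2 + c^2 = 1 := Real.sin_sq_add_cos_sq _
  have hs1 : s ≤ 1 := by nlinarith [sq_nonneg (s-1)]
  have h2 : Real.sqrt 2 * Real.sqrt 2 = 2 := Real.mul_self_sqrt (by norm_num)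
  have hsin : Real.sqrt 2 * Real.sin (2*γ1 + π/4) = s + c := by
    rw [Real.sin_add, Real.sin_pi_div_four, Real.cos_pi_div_four, hs_def, hc_def]
    linear_combination ((Real.sin (2*γ1) + Real.cos (2*γ1))/2) * h2
  rw [hsin, Real.cos_sq, ← hc_def]
  have h3 : (0:ℝ) < 3 + (s + c) := by linarith
  split_ifs with hcond
  · -- branch 1
    have hxT : x * (3 + (s + c)) < 1 - (s + c) := by
      have := (lt_div_iff₀ h3).mp hcond
      linarith
    have hD : -1 + 3*x + (1+x)*c < 0 := by
      nlinarith [mul_nonneg hs (by linarith : (0:ℝ) ≤ 1 + x)]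
    have h1 : (1 + x) * x * (1/2 + c/2) / (-1 + 3*x + (1 + x) * c) ≤ 1/18 := by
      rw [div_le_iff_of_neg hD]
      nlinarith [mul_nonneg (by linarith : (0:ℝ) ≤ 1+c) (sq_nonneg (3*x+1)),
        mul_nonneg (by linarith : (0:ℝ) ≤ -c) (by linarith : (0:ℝ) ≤ 1-x)]
    constructor
    · linarith
    · intro heq
      have hA : (1 + x) * x * (1/2 + c/2) / (-1 + 3*x + (1 + x) * c) = 1/18 := by linarith
      rw [div_eq_iff (ne_of_lt hD)] at hA
      have hq : (1+c)*(3*x+1)^2 + (-c)*(2*(1-x)) = 0 := by linear_combination 18 * hA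
      have hq1 : 0 ≤ (1+c)*(3*x+1)^2 :=
        mul_nonneg (by linarith) (sq_nonneg _)
      have hq2 : 0 ≤ (-c)*(2*(1-x)) :=
        mul_nonneg (by linarith) (by linarith)
      have hcz : c = 0 := by
        rcases mul_eq_zero.mp (by linarith : (-c)*(2*(1-x)) = 0) with h | h
        · linarith
        · exfalso
          have hx1 : x = 1 := by linarith
          rw [hx1] at hxT
          linarith
      have hx13 : x = -1/3 := by
        have hsq : (3*x+1)^2 = 0 := by
          have : (1+c)*(3*x+1)^2 = 0 := by linarith
          rw [hcz] at this; linarith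
        have := pow_eq_zero_iff (n := 2) (by norm_num) |>.mp hsq
        linarith
      refine ⟨?_, hx13⟩
      have h2γ : 2*γ1 = π/2 := by
        apply Real.injOn_cos ⟨by linarith, by linarith⟩ ⟨by linarith, by linarith⟩
        rw [Real.cos_pi_div_two, ← hc_def, hcz]
      linarith
  · -- branch 2
    push_neg at hcond
    have hge : 1 - (s + c) ≤ x * (3 + (s + c)) := by
      have := (div_le_iff₀ h3).mp hcond
      linarith
    have key : 3 + 4*c < 5*s := key_ineq s c hs hsc hc0 hc1
    have hge' : 1 - s - c ≤ 3*x + x*s + x*c := by nlinarith [hge]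
    have hP : 0 ≤ (1 + x) * (1 - (s + c)) :=
      mul_nonneg (by linarith) (by linarith)
    have hP' : 0 ≤ 1 - s - c + x - x*s - x*c := by nlinarith [hP]
    have h1x : 0 ≤ x := by linarith
    have hmp : 0 < (1 + x) * (5*s - 4*c - 3) :=
      mul_pos (by linarith) (by linarith)
    have hmp' : 0 < 5*s - 4*c - 3 + 5*(x*s) - 4*(x*c) - 3*x := by nlinarith [hmp]
    have hstrict : 4/9 < (1 + x) * (1 + s) / 4 := by
      rw [show (1 + x) * (1 + s) = 1 + s + x + x*s from by ring]
      linarith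
    exact ⟨le_of_lt hstrict, fun h => absurd h (by linarith)⟩

theorem stmt11 :
    let G : ℝ → ℝ → ℝ := fun γ1 x =>
      if x < (1 - Real.sqrt 2 * Real.sin (2*γ1 + π/4)) / (3 + Real.sqrt 2 * Real.sin (2*γ1 + π/4))
      then 1/2 - (1 + x) * x * (Real.cos γ1)^2 / (-1 + 3*x + (1 + x) * Real.cos (2*γ1))
      else (1 + x) * (1 + Real.sin (2*γ1)) / 4
    ((∀ γ1 ∈ Set.Icc (π/4) (π/2), ∀ x ∈ Set.Icc (-1:ℝ) 1, (4:ℝ)/9 ≤ G γ1 x) ∧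
      G (π/4) (-1/3) = 4/9 ∧
      (∀ γ1 ∈ Set.Icc (π/4) (π/2), ∀ x ∈ Set.Icc (-1:ℝ) 1,
        G γ1 x = 4/9 → γ1 = π/4 ∧ x = -1/3)) := by
  intro G
  have h2 : Real.sqrt 2 * Real.sqrt 2 = 2 := Real.mul_self_sqrt (by norm_num)
  have hval :
      (if (-1/3 : ℝ) < (1 - Real.sqrt 2 * Real.sin (2*(π/4) + π/4)) / (3 + Real.sqrt 2 * Real.sin (2*(π/4) + π/4))
       then 1/2 - (1 + (-1/3)) * (-1/3) * (Real.cos (π/4))^2 / (-1 + 3*(-1/3) + (1 + (-1/3)) * Real.cos (2*(π/4)))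
       else (1 + (-1/3)) * (1 + Real.sin (2*(π/4))) / 4) = 4/9 := by
    have h1 : Real.sqrt 2 * Real.sin (2*(π/4) + π/4) = 1 := by
      rw [show 2*(π/4) + π/4 = π/2 + π/4 from by ring, Real.sin_add,
        Real.sin_pi_div_two, Real.cos_pi_div_two, Real.cos_pi_div_four,
        Real.sin_pi_div_four]
      linear_combination h2 / 2
    have hcsq : (Real.cos (π/4))^2 = 1/2 := by
      rw [Real.cos_pi_div_four]
      nlinarith [h2]
    rw [h1, if_pos (by norm_num), hcsq, show 2*(π/4) = π/2 from by ring,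
      Real.cos_pi_div_two]
    norm_num
  refine ⟨fun γ1 hγ x hx => (aux_main γ1 x hγ hx).1, hval,
    fun γ1 hγ x hx heq => (aux_main γ1 x hγ hx).2 heq⟩
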